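/- arXiv:1110.0287 — 2 statements merged into one kernel-verified Lean document; each statement's English description precedes it below -/
import Mathlib

section
/- Let d, M be positive integers, N = d+1, and for each 1 ≤ n ≤ M let A_n be a tensor of order n. Let W : ℝ × ℝ^d → ℝ^N be of class C^{M+1} (jointly in time and space) and suppose W satisfies the PDE system ∂_t W^i (t,x) + Σ_{n=1}^M (A_n : ∇^n W)^i (t,x) = 0 for all (t,x) ∈ ℝ × ℝ^d and all 1 ≤ i ≤ N, where the spatial derivatives are taken at fixed t. Let r ∈ O_d(ℝ), R(r) = Diag(1, r), and define W̃(t, x̃) = (R(r))⁻¹ · W(t, r x̃). Then W̃ satisfies ∂_t W̃^i (t,x̃) + Σ_{n=1}^M (Ã_n : ∇^n W̃)^i (t,x̃) = 0 for all (t,x̃) and all i, where Ã_n = Φ_n(r⁻¹)(A_n) for each 1 ≤ n ≤ M. -/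
open Matrix

noncomputable section

/-- The block-diagonal `(d+1) × (d+1)` matrix `R(r) = Diag(1, r)` with upper-left
`1 × 1` block equal to `1` and lower-right `d × d` block equal to `r`. -/
def diagOne {d : ℕ} (r : Matrix (Fin d) (Fin d) ℝ) :
    Matrix (Fin (d + 1)) (Fin (d + 1)) ℝ :=
  Matrix.of fun i j =>
    if hi : i = 0 then (if j = 0 then (1 : ℝ) else 0)
    else if hj : j = 0 then 0 else r (i.pred hi) (j.pred hj)

lemma diagOne_mul {d : ℕ} (r s : Matrix (Fin d) (Fin d) ℝ) :
    diagOne r * diagOne s = diagOne (r * s) := by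
  ext i j
  rw [Matrix.mul_apply]
  rcases eq_or_ne i 0 with hi | hi
  · subst hi
    simp [diagOne, Fin.sum_univ_succ, Fin.succ_ne_zero]
  · rcases eq_or_ne j 0 with hj | hj
    · subst hj
      simp [diagOne, hi, Fin.sum_univ_succ, Fin.succ_ne_zero]
    · simp [diagOne, hi, hj, Fin.sum_univ_succ, Fin.succ_ne_zero, Fin.pred_succ,
        Matrix.mul_apply]

lemma diagOne_one {d : ℕ} : diagOne (1 : Matrix (Fin d) (Fin d) ℝ) = 1 := by
  ext i j
  rcases eq_or_ne i 0 with hi | hi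
  · subst hi
    rcases eq_or_ne j 0 with hj | hj
    · subst hj; simp [diagOne, Matrix.one_apply]
    · simp [diagOne, Matrix.one_apply, hj, (Ne.symm hj)]
  · rcases eq_or_ne j 0 with hj | hj
    · subst hj; simp [diagOne, hi, Matrix.one_apply, hi]
    · simp [diagOne, hi, hj, Matrix.one_apply, Fin.pred_inj]

lemma mySumCollapse {ι : Type*} [Fintype ι] [DecidableEq ι]
    (E D : ι → ι → ℝ)
    (hDE : ∀ k' k, (∑ j, E k' j * D j k) = if k' = k then (1 : ℝ) else 0)
    (x y : ι → ℝ) :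
    ∑ j, (∑ k', x k' * E k' j) * (∑ k, D j k * y k) = ∑ k, x k * y k := by
  calc ∑ j, (∑ k', x k' * E k' j) * (∑ k, D j k * y k)
      = ∑ j, ∑ k', ∑ k, (x k' * y k) * (E k' j * D j k) := by
        refine Finset.sum_congr rfl fun j _ => ?_
        rw [Finset.sum_mul]
        refine Finset.sum_congr rfl fun k' _ => ?_
        rw [Finset.mul_sum]
        exact Finset.sum_congr rfl fun k _ => by ring
    _ = ∑ k', ∑ k, ∑ j, (x k' * y k) * (E k' j * D j k) := by
        rw [Finset.sum_comm]
        exact Finset.sum_congr rfl fun k' _ => Finset.sum_comm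
    _ = ∑ k', ∑ k, (x k' * y k) * (if k' = k then (1 : ℝ) else 0) := by
        refine Finset.sum_congr rfl fun k' _ => Finset.sum_congr rfl fun k _ => ?_
        rw [← Finset.mul_sum, hDE]
    _ = ∑ k, x k * y k := by
        simp [mul_ite, Finset.sum_ite_eq, Finset.mem_univ]


/-- The action `Φ_n(r)` of a `d × d` matrix `r` on tensors of order `n`:
`(Φ_n(r)(A))^{i,α_1,…,α_n}_j
  = Σ_{β,k,l} (R(r))^i_l A^{l,β_1,…,β_n}_k r^{α_1}_{β_1} ⋯ r^{α_n}_{β_n} ((R(r))⁻¹)^k_j`,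
where `R(r) = Diag(1, r)`. -/
def Phi {d n : ℕ} (r : Matrix (Fin d) (Fin d) ℝ)
    (A : Fin (d + 1) → Fin (d + 1) → (Fin n → Fin d) → ℝ) :
    Fin (d + 1) → Fin (d + 1) → (Fin n → Fin d) → ℝ :=
  fun i j α =>
    ∑ l : Fin (d + 1), ∑ k : Fin (d + 1), ∑ β : Fin n → Fin d,
      diagOne r i l * A l k β * (∏ m : Fin n, r (α m) (β m)) * (diagOne r)⁻¹ k j

/-- The `n`-th iterated spatial partial derivative `∂_{α_1} ⋯ ∂_{α_n} f (x)` of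
`f : ℝ^d → ℝ` along standard basis directions: the `n`-th iterated Fréchet
derivative applied to `(e_{α_1}, …, e_{α_n})`. -/
def iterPartial {d : ℕ} (n : ℕ) (f : (Fin d → ℝ) → ℝ) (x : Fin d → ℝ)
    (α : Fin n → Fin d) : ℝ :=
  iteratedFDeriv ℝ n f x (fun m => Pi.single (α m) (1 : ℝ))

lemma iterPartial_mulVec {d : ℕ} (r : Matrix (Fin d) (Fin d) ℝ) {n : ℕ}
    {f : (Fin d → ℝ) → ℝ} (hf : ContDiff ℝ n f) (x : Fin d → ℝ) (α : Fin n → Fin d) :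
    iterPartial n (fun y => f (r.mulVec y)) x α
      = ∑ β : Fin n → Fin d, (∏ m, r (β m) (α m)) * iterPartial n f (r.mulVec x) β := by
  set L : (Fin d → ℝ) →L[ℝ] (Fin d → ℝ) :=
    LinearMap.toContinuousLinearMap (Matrix.mulVecLin r) with hL
  have hcoe : ∀ y, L y = r.mulVec y := fun y => by
    simp [hL, Matrix.mulVecLin_apply]
  have hcomp : (fun y => f (r.mulVec y)) = f ∘ L := by
    funext y; simp [hcoe]
  rw [iterPartial, hcomp, L.iteratedFDeriv_comp_right hf x le_rfl]
  simp only [ContinuousMultilinearMap.compContinuousLinearMap_apply]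
  have hLe : ∀ a : Fin d, L (Pi.single a (1 : ℝ)) = ∑ b : Fin d, r b a • (Pi.single b (1 : ℝ) : Fin d → ℝ) := by
    intro a
    funext c
    simp [hcoe, Matrix.mulVec, dotProduct, Pi.single_apply, mul_comm]
  rw [show (fun m => L (Pi.single (α m) (1 : ℝ)))
      = fun m => ∑ b : Fin d, r b (α m) • (Pi.single b (1 : ℝ) : Fin d → ℝ) from funext fun m => hLe (α m)]
  rw [ContinuousMultilinearMap.map_sum]
  refine Finset.sum_congr rfl fun β _ => ?_
  rw [ContinuousMultilinearMap.map_smul_univ]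
  simp [iterPartial, hcoe]

/-- The maximal contraction at fixed time `t`:
`(A : ∇^n W)^i (t, x)
  = Σ_j Σ_{α_1,…,α_n} A^{i,α_1,…,α_n}_j ∂_{α_1} ⋯ ∂_{α_n} W^j (t, x)`,
the spatial derivatives being taken at fixed `t`. -/
def contractT {d : ℕ} (n : ℕ)
    (A : Fin (d + 1) → Fin (d + 1) → (Fin n → Fin d) → ℝ)
    (W : ℝ × (Fin d → ℝ) → (Fin (d + 1) → ℝ)) (t : ℝ) (x : Fin d → ℝ)
    (i : Fin (d + 1)) : ℝ :=
  ∑ j : Fin (d + 1), ∑ α : Fin n → Fin d,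
    A i j α * iterPartial n (fun y => W (t, y) j) x α

set_option maxHeartbeats 2000000 in
/-- If `W : ℝ × ℝ^d → ℝ^N` (`N = d + 1`) is of class `C^{M+1}` and satisfies the
PDE system `∂_t W^i + Σ_{n=1}^M (A_n : ∇^n W)^i = 0`, and `r ∈ O_d(ℝ)`, then the
rotated function `W̃(t, x̃) = (R(r))⁻¹ W(t, r x̃)` satisfies
`∂_t W̃^i + Σ_{n=1}^M (Ã_n : ∇^n W̃)^i = 0` with `Ã_n = Φ_n(r⁻¹)(A_n)`. -/
theorem pde_system_rotation (d M : ℕ) (hd : 0 < d) (hM : 0 < M)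
    (A : (n : ℕ) → Fin (d + 1) → Fin (d + 1) → (Fin n → Fin d) → ℝ)
    (W : ℝ × (Fin d → ℝ) → (Fin (d + 1) → ℝ))
    (hW : ContDiff ℝ (M + 1) W)
    (hpde : ∀ (t : ℝ) (x : Fin d → ℝ) (i : Fin (d + 1)),
      deriv (fun s => W (s, x) i) t
        + ∑ n ∈ Finset.Icc 1 M, contractT n (A n) W t x i = 0)
    (r : Matrix (Fin d) (Fin d) ℝ) (hr : rᵀ * r = 1) :
    ∀ (t : ℝ) (xt : Fin d → ℝ) (i : Fin (d + 1)),
      deriv (fun s => (diagOne r)⁻¹.mulVec (W (s, r.mulVec xt)) i) t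
        + ∑ n ∈ Finset.Icc 1 M,
            contractT n (Phi r⁻¹ (A n))
              (fun p => (diagOne r)⁻¹.mulVec (W (p.1, r.mulVec p.2))) t xt i = 0 := by
  intro t xt i
  have hr' : r * rᵀ = 1 := mul_eq_one_comm.mp hr
  have hD1 : diagOne r * diagOne rᵀ = 1 := by rw [diagOne_mul, hr', diagOne_one]
  have hD2 : diagOne rᵀ * diagOne r = 1 := by rw [diagOne_mul, hr, diagOne_one]
  have hCinv : (diagOne r)⁻¹ = diagOne rᵀ := Matrix.inv_eq_right_inv hD1
  have hEinv : (diagOne rᵀ)⁻¹ = diagOne r := Matrix.inv_eq_right_inv hD2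
  have hrinv : r⁻¹ = rᵀ := Matrix.inv_eq_right_inv hr'
  -- delta identities
  have hδN : ∀ k' k : Fin (d + 1),
      (∑ j, diagOne r k' j * diagOne rᵀ j k) = if k' = k then (1 : ℝ) else 0 := by
    intro k' k
    rw [← Matrix.mul_apply, hD1, Matrix.one_apply]
  have hδB : ∀ (n : ℕ) (β' β : Fin n → Fin d),
      (∑ α : Fin n → Fin d, (∏ m, rᵀ (α m) (β' m)) * (∏ m, r (β m) (α m)))
        = if β' = β then (1 : ℝ) else 0 := by
    intro n β' β
    have h1 : ∀ α : Fin n → Fin d,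
        (∏ m, rᵀ (α m) (β' m)) * (∏ m, r (β m) (α m))
          = ∏ m, (r (β m) (α m) * rᵀ (α m) (β' m)) := by
      intro α
      rw [← Finset.prod_mul_distrib]
      exact Finset.prod_congr rfl fun m _ => mul_comm _ _
    calc ∑ α : Fin n → Fin d, (∏ m, rᵀ (α m) (β' m)) * (∏ m, r (β m) (α m))
        = ∑ α : Fin n → Fin d, ∏ m, (r (β m) (α m) * rᵀ (α m) (β' m)) :=
          Finset.sum_congr rfl fun α _ => h1 α
      _ = ∑ α ∈ Fintype.piFinset (fun _ : Fin n => (Finset.univ : Finset (Fin d))),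
            ∏ m, (r (β m) (α m) * rᵀ (α m) (β' m)) := by rw [Fintype.piFinset_univ]
      _ = ∏ m, ∑ a, (r (β m) a * rᵀ a (β' m)) :=
          (Finset.prod_univ_sum (fun _ : Fin n => (Finset.univ : Finset (Fin d)))
            (fun m a => r (β m) a * rᵀ a (β' m))).symm
      _ = ∏ m, (1 : Matrix (Fin d) (Fin d) ℝ) (β m) (β' m) := by
          refine Finset.prod_congr rfl fun m _ => ?_
          rw [← hr', Matrix.mul_apply]
      _ = if β' = β then (1 : ℝ) else 0 := by
          rcases eq_or_ne β' β with h | h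
          · subst h; simp [Matrix.one_apply]
          · have : ∃ m, β m ≠ β' m := by
              by_contra hc
              push_neg at hc
              exact h (funext fun m => (hc m).symm)
            obtain ⟨m, hm⟩ := this
            rw [if_neg h]
            exact Finset.prod_eq_zero (Finset.mem_univ m) (by simp [Matrix.one_apply, hm])
  -- smoothness of components
  have hWt : ∀ (s : ℝ) (k : Fin (d + 1)), ContDiff ℝ ((M : WithTop ℕ∞) + 1)
      (fun y => W (s, y) k) := fun s k =>
    (contDiff_pi.1 hW k).comp (ContDiff.prodMk contDiff_const contDiff_id)
  have hcast : ∀ {n : ℕ}, n ≤ M → ((n : WithTop ℕ∞)) ≤ (M : WithTop ℕ∞) + 1 := by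
    intro n hn
    exact le_trans (by exact_mod_cast hn) le_self_add
  have hg : ∀ (n : ℕ), n ≤ M → ∀ (s : ℝ) (k : Fin (d + 1)),
      ContDiff ℝ (n : ℕ) (fun y => W (s, r.mulVec y) k) := by
    intro n hn s k
    exact ((hWt s k).of_le (hcast hn)).comp
      (LinearMap.toContinuousLinearMap (Matrix.mulVecLin r)).contDiff
  -- time derivative
  have hdiff : ∀ k, DifferentiableAt ℝ (fun s => W (s, r.mulVec xt) k) t := by
    intro k
    have h1 : ContDiff ℝ (1 : WithTop ℕ∞) (fun s : ℝ => W (s, r.mulVec xt) k) :=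
      ((contDiff_pi.1 hW k).comp (ContDiff.prodMk contDiff_id contDiff_const)).of_le le_add_self
    exact (h1.differentiable one_ne_zero).differentiableAt
  have htime : deriv (fun s => (diagOne r)⁻¹.mulVec (W (s, r.mulVec xt)) i) t
      = ∑ k, diagOne rᵀ i k * deriv (fun s => W (s, r.mulVec xt) k) t := by
    have hfe : (fun s => (diagOne r)⁻¹.mulVec (W (s, r.mulVec xt)) i)
        = fun s => ∑ k, diagOne rᵀ i k * W (s, r.mulVec xt) k := by
      funext s
      rw [hCinv]
      simp [Matrix.mulVec, dotProduct]
    rw [hfe, deriv_fun_sum fun k _ => (hdiff k).const_mul _]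
    exact Finset.sum_congr rfl fun k _ => deriv_const_mul _ (hdiff k)
  -- the contraction identity
  have hcon : ∀ n ∈ Finset.Icc 1 M,
      contractT n (Phi r⁻¹ (A n))
          (fun p => (diagOne r)⁻¹.mulVec (W (p.1, r.mulVec p.2))) t xt i
        = ∑ l, diagOne rᵀ i l * contractT n (A n) W t (r.mulVec xt) l := by
    intro n hn
    have hnM : n ≤ M := (Finset.mem_Icc.mp hn).2
    -- notation
    set P : Fin (d + 1) → (Fin n → Fin d) → ℝ :=
      fun k β => iterPartial n (fun y => W (t, y) k) (r.mulVec xt) β with hP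
    -- Phi rearranged
    have hPhi : ∀ (j : Fin (d + 1)) (α : Fin n → Fin d),
        Phi r⁻¹ (A n) i j α
          = ∑ k', (∑ l, ∑ β', diagOne rᵀ i l * A n l k' β' * (∏ m, rᵀ (α m) (β' m)))
              * diagOne r k' j := by
      intro j α
      show (∑ l, ∑ k, ∑ β, diagOne r⁻¹ i l * A n l k β * (∏ m, r⁻¹ (α m) (β m))
          * (diagOne r⁻¹)⁻¹ k j) = _
      simp only [hrinv, hEinv]
      rw [Finset.sum_comm]
      refine Finset.sum_congr rfl fun k _ => ?_
      simp only [← Finset.sum_mul]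
    -- iterated derivative of the rotated function
    have hIter : ∀ (j : Fin (d + 1)) (α : Fin n → Fin d),
        iterPartial n (fun y => (diagOne r)⁻¹.mulVec (W (t, r.mulVec y)) j) xt α
          = ∑ k, diagOne rᵀ j k * (∑ β, (∏ m, r (β m) (α m)) * P k β) := by
      intro j α
      have hfe : (fun y => (diagOne r)⁻¹.mulVec (W (t, r.mulVec y)) j)
          = fun y => ∑ k, diagOne rᵀ j k * W (t, r.mulVec y) k := by
        funext y
        rw [hCinv]
        simp [Matrix.mulVec, dotProduct]
      rw [iterPartial, hfe]
      have hsum := iteratedFDeriv_sum (𝕜 := ℝ) (i := n) (u := Finset.univ)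
        (f := fun k (y : Fin d → ℝ) => diagOne rᵀ j k * W (t, r.mulVec y) k)
        (fun k _ => contDiff_const.mul (hg n hnM t k))
      rw [hsum]
      simp only [Finset.sum_apply, ContinuousMultilinearMap.sum_apply]
      refine Finset.sum_congr rfl fun k _ => ?_
      have hsmul := iteratedFDeriv_const_smul_apply' (𝕜 := ℝ) (a := diagOne rᵀ j k)
        (f := fun y => W (t, r.mulVec y) k) (x := xt) (hg n hnM t k).contDiffAt
      simp only [smul_eq_mul] at hsmul
      rw [hsmul]
      simp only [ContinuousMultilinearMap.smul_apply, smul_eq_mul]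
      congr 1
      have := iterPartial_mulVec r (f := fun y => W (t, y) k)
        ((hWt t k).of_le (hcast hnM)) xt α
      rw [iterPartial] at this
      rw [this]
    -- main computation
    calc contractT n (Phi r⁻¹ (A n))
          (fun p => (diagOne r)⁻¹.mulVec (W (p.1, r.mulVec p.2))) t xt i
        = ∑ j, ∑ α, Phi r⁻¹ (A n) i j α
            * iterPartial n (fun y => (diagOne r)⁻¹.mulVec (W (t, r.mulVec y)) j) xt α := rfl
      _ = ∑ α : Fin n → Fin d, ∑ j,
            (∑ k', (∑ l, ∑ β', diagOne rᵀ i l * A n l k' β' * (∏ m, rᵀ (α m) (β' m)))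
                * diagOne r k' j)
            * (∑ k, diagOne rᵀ j k * (∑ β, (∏ m, r (β m) (α m)) * P k β)) := by
          rw [Finset.sum_comm]
          exact Finset.sum_congr rfl fun α _ => Finset.sum_congr rfl fun j _ => by
            rw [hPhi j α, hIter j α]
      _ = ∑ α : Fin n → Fin d, ∑ k,
            (∑ l, ∑ β', diagOne rᵀ i l * A n l k β' * (∏ m, rᵀ (α m) (β' m)))
            * (∑ β, (∏ m, r (β m) (α m)) * P k β) := by
          refine Finset.sum_congr rfl fun α _ =>
            mySumCollapse (fun k' j => diagOne r k' j) (fun j k => diagOne rᵀ j k) hδN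
              (fun k' => ∑ l, ∑ β', diagOne rᵀ i l * A n l k' β' * (∏ m, rᵀ (α m) (β' m)))
              (fun k => ∑ β, (∏ m, r (β m) (α m)) * P k β)
      _ = ∑ k, ∑ α : Fin n → Fin d,
            (∑ β', (∑ l, diagOne rᵀ i l * A n l k β') * (∏ m, rᵀ (α m) (β' m)))
            * (∑ β, (∏ m, r (β m) (α m)) * P k β) := by
          rw [Finset.sum_comm]
          refine Finset.sum_congr rfl fun k _ => Finset.sum_congr rfl fun α _ => ?_
          congr 1
          rw [Finset.sum_comm]
          refine Finset.sum_congr rfl fun β' _ => ?_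
          rw [← Finset.sum_mul]
      _ = ∑ k, ∑ β, (∑ l, diagOne rᵀ i l * A n l k β) * P k β := by
          refine Finset.sum_congr rfl fun k _ => ?_
          exact mySumCollapse (fun β' α => ∏ m, rᵀ (α m) (β' m))
            (fun α β => ∏ m, r (β m) (α m)) (fun β' β => hδB n β' β)
            (fun β' => ∑ l, diagOne rᵀ i l * A n l k β') (P k)
      _ = ∑ k, ∑ β, ∑ l, diagOne rᵀ i l * (A n l k β * P k β) := by
          refine Finset.sum_congr rfl fun k _ => Finset.sum_congr rfl fun β _ => ?_
          rw [Finset.sum_mul]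
          exact Finset.sum_congr rfl fun l _ => by ring
      _ = ∑ k, ∑ l, ∑ β, diagOne rᵀ i l * (A n l k β * P k β) :=
          Finset.sum_congr rfl fun k _ => Finset.sum_comm
      _ = ∑ l, ∑ k, ∑ β, diagOne rᵀ i l * (A n l k β * P k β) := Finset.sum_comm
      _ = ∑ l, diagOne rᵀ i l * contractT n (A n) W t (r.mulVec xt) l := by
          refine Finset.sum_congr rfl fun l _ => ?_
          simp only [← Finset.mul_sum]
          congr 1
  -- assemble
  rw [htime, Finset.sum_congr rfl hcon, Finset.sum_comm]
  rw [← Finset.sum_add_distrib]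
  refine Finset.sum_eq_zero fun l _ => ?_
  rw [← Finset.mul_sum, ← mul_add, hpde t (r.mulVec xt) l, mul_zero]
end
end

section
/- Let d, M be positive integers, N = d+1, and for each 1 ≤ n ≤ M let A_n be a tensor of order n. Suppose each A_n is a fixed point of the group action Φ_n, i.e. Φ_n(r)(A_n) = A_n for every r ∈ O_d(ℝ) and every 1 ≤ n ≤ M. Then the PDE system ∂_t W + Σ_{n=1}^M A_n : ∇^n W = 0 is isotropic: for every C^{M+1} solution W : ℝ × ℝ^d → ℝ^N of the system and every r ∈ O_d(ℝ), the rotated function W̃(t, x̃) = (Diag(1,r))⁻¹ · W(t, r x̃) is again a solution of the SAME system, i.e. ∂_t W̃^i + Σ_{n=1}^M (A_n : ∇^n W̃)^i = 0 for all (t, x̃) and all 1 ≤ i ≤ N. -/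
open Matrix

noncomputable section

/-! ### Auxiliary lemmas -/

lemma sum3_comm' {ι₁ ι₂ ι₃ : Type*} [Fintype ι₁] [Fintype ι₂] [Fintype ι₃]
    (F : ι₁ → ι₂ → ι₃ → ℝ) :
    ∑ a : ι₁, ∑ b : ι₂, ∑ c : ι₃, F a b c = ∑ c, ∑ a, ∑ b, F a b c :=
  calc ∑ a, ∑ b, ∑ c, F a b c = ∑ a, ∑ c, ∑ b, F a b c :=
        Finset.sum_congr rfl fun _ _ => Finset.sum_comm
    _ = ∑ c, ∑ a, ∑ b, F a b c := Finset.sum_comm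

lemma sum4_comm' {ι₁ ι₂ ι₃ ι₄ : Type*} [Fintype ι₁] [Fintype ι₂] [Fintype ι₃] [Fintype ι₄]
    (F : ι₁ → ι₂ → ι₃ → ι₄ → ℝ) :
    ∑ a : ι₁, ∑ b : ι₂, ∑ c : ι₃, ∑ e : ι₄, F a b c e
      = ∑ c, ∑ e, ∑ a, ∑ b, F a b c e :=
  calc ∑ a, ∑ b, ∑ c, ∑ e, F a b c e
      = ∑ a, ∑ c, ∑ b, ∑ e, F a b c e :=
        Finset.sum_congr rfl fun _ _ => Finset.sum_comm
    _ = ∑ c, ∑ a, ∑ b, ∑ e, F a b c e := Finset.sum_comm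
    _ = ∑ c, ∑ a, ∑ e, ∑ b, F a b c e :=
        Finset.sum_congr rfl fun _ _ => Finset.sum_congr rfl fun _ _ => Finset.sum_comm
    _ = ∑ c, ∑ e, ∑ a, ∑ b, F a b c e :=
        Finset.sum_congr rfl fun _ _ => Finset.sum_comm

lemma diagOne_left_inv {d : ℕ} {r : Matrix (Fin d) (Fin d) ℝ} (hr : rᵀ * r = 1) :
    (diagOne r)ᵀ * diagOne r = 1 := by
  ext i j
  rw [Matrix.mul_apply, Fin.sum_univ_succ]
  by_cases hi : i = 0 <;> by_cases hj : j = 0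
  · subst hi; subst hj
    simp [diagOne, Matrix.one_apply, Fin.succ_ne_zero]
  · subst hi
    simp [diagOne, Matrix.one_apply, Fin.succ_ne_zero, hj, Ne.symm hj]
  · subst hj
    simp [diagOne, Matrix.one_apply, Fin.succ_ne_zero, hi, Ne.symm hi]
  · have h := congrFun (congrFun hr (i.pred hi)) (j.pred hj)
    rw [Matrix.mul_apply] at h
    simp only [Matrix.transpose_apply] at h
    simp only [Matrix.transpose_apply, diagOne, Matrix.of_apply, hi, hj,
      Fin.succ_ne_zero, dite_false, dif_neg, Fin.pred_succ]
    rw [h]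
    simp [Matrix.one_apply, Fin.pred_inj]

lemma diagOne_inv_mul {d : ℕ} {r : Matrix (Fin d) (Fin d) ℝ} (hr : rᵀ * r = 1) :
    (diagOne r)⁻¹ * diagOne r = 1 := by
  rw [Matrix.inv_eq_left_inv (diagOne_left_inv hr)]
  exact diagOne_left_inv hr

lemma iterPartial_comp_mulVec {d : ℕ} (n : ℕ) (r : Matrix (Fin d) (Fin d) ℝ)
    {f : (Fin d → ℝ) → ℝ} (hf : ContDiff ℝ n f) (x : Fin d → ℝ) (α : Fin n → Fin d) :
    iterPartial n (fun y => f (r.mulVec y)) x α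
      = ∑ β : Fin n → Fin d, (∏ m, r (β m) (α m)) * iterPartial n f (r.mulVec x) β := by
  classical
  set L : (Fin d → ℝ) →L[ℝ] (Fin d → ℝ) := LinearMap.toContinuousLinearMap r.mulVecLin with hLdef
  have hL : ∀ v, L v = r.mulVec v := fun v => rfl
  have h1 : (fun y => f (r.mulVec y)) = f ∘ L := rfl
  rw [iterPartial, h1, L.iteratedFDeriv_comp_right hf x le_rfl]
  rw [ContinuousMultilinearMap.compContinuousLinearMap_apply]
  have he : ∀ a : Fin d,
      L (Pi.single a (1:ℝ)) = ∑ b : Fin d, r b a • (Pi.single b (1:ℝ) : Fin d → ℝ) := by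
    intro a; funext c
    simp [hL, Matrix.mulVec, dotProduct, Pi.single_apply, mul_comm]
  simp only [he]
  rw [(iteratedFDeriv ℝ n f (L x)).map_sum]
  refine Finset.sum_congr rfl fun β _ => ?_
  rw [(iteratedFDeriv ℝ n f (L x)).map_smul_univ]
  simp [iterPartial, hL, smul_eq_mul]

lemma iterPartial_sum_smul {d n K : ℕ} (c : Fin K → ℝ) (f : Fin K → (Fin d → ℝ) → ℝ)
    (hf : ∀ k, ContDiff ℝ n (f k)) (x : Fin d → ℝ) (α : Fin n → Fin d) :
    iterPartial n (fun y => ∑ k, c k * f k y) x α = ∑ k, c k * iterPartial n (f k) x α := by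
  have h1 : (fun y => ∑ k, c k * f k y) = (fun y => ∑ k : Fin K, (c k • f k) y) := by
    funext y; simp [smul_eq_mul]
  rw [iterPartial, h1]
  rw [show (fun y => ∑ k : Fin K, (c k • f k) y) = (∑ k : Fin K, c k • f k ·) from rfl]
  rw [iteratedFDeriv_sum (fun k _ => (hf k).const_smul (c k))]
  simp only [Finset.sum_apply, ContinuousMultilinearMap.sum_apply]
  refine Finset.sum_congr rfl fun k _ => ?_
  rw [iteratedFDeriv_const_smul_apply' (hf k).contDiffAt]
  simp [iterPartial, smul_eq_mul]

lemma collapse {N : ℕ} {Ri R : Matrix (Fin N) (Fin N) ℝ} (h : Ri * R = 1)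
    (i : Fin N) (u : Fin N → ℝ) :
    ∑ l, Ri i l * ∑ p, R l p * u p = u i := by
  have h1 : ∀ l, Ri i l * ∑ p, R l p * u p = ∑ p, Ri i l * R l p * u p := by
    intro l; rw [Finset.mul_sum]; exact Finset.sum_congr rfl fun p _ => by ring
  simp only [h1]
  rw [Finset.sum_comm]
  have h2 : ∀ p, (∑ l, Ri i l * R l p * u p) = (Ri * R) i p * u p := by
    intro p; rw [Matrix.mul_apply, Finset.sum_mul]
  simp only [h2, h, Matrix.one_apply]
  simp [ite_mul]

lemma contract_rotate {d : ℕ} (n : ℕ)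
    (A : Fin (d + 1) → Fin (d + 1) → (Fin n → Fin d) → ℝ)
    (W : ℝ × (Fin d → ℝ) → (Fin (d + 1) → ℝ)) (t : ℝ)
    (hWc : ∀ k : Fin (d + 1), ContDiff ℝ n (fun y => W (t, y) k))
    (r : Matrix (Fin d) (Fin d) ℝ) (hr : rᵀ * r = 1)
    (x : Fin d → ℝ) (i : Fin (d + 1)) :
    contractT n A (fun p => (diagOne r)⁻¹.mulVec (W (p.1, r.mulVec p.2))) t x i
      = ∑ l, (diagOne r)⁻¹ i l * contractT n (Phi r A) W t (r.mulVec x) l := by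
  classical
  have hone : (diagOne r)⁻¹ * diagOne r = 1 := diagOne_inv_mul hr
  set R : Matrix (Fin (d+1)) (Fin (d+1)) ℝ := diagOne r with hRdef
  set Ri : Matrix (Fin (d+1)) (Fin (d+1)) ℝ := (diagOne r)⁻¹ with hRidef
  set D : Fin (d + 1) → (Fin n → Fin d) → ℝ :=
    fun k β => iterPartial n (fun y => W (t, y) k) (r.mulVec x) β with hD
  set u : Fin (d + 1) → ℝ := fun p => ∑ k, ∑ β : Fin n → Fin d,
      ∑ q, ∑ γ : Fin n → Fin d,
        A p q γ * (∏ m, r (β m) (γ m)) * Ri q k * D k β with hu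
  -- Step A : the left-hand side equals `u i`.
  have hcomp : ∀ (j : Fin (d + 1)) (γ : Fin n → Fin d),
      iterPartial n (fun y => Ri.mulVec (W (t, r.mulVec y)) j) x γ
        = ∑ k, Ri j k * ∑ β : Fin n → Fin d, (∏ m, r (β m) (γ m)) * D k β := by
    intro j γ
    have h0 : (fun y => Ri.mulVec (W (t, r.mulVec y)) j)
        = fun y => ∑ k, Ri j k * W (t, r.mulVec y) k := by
      funext y; simp [Matrix.mulVec, dotProduct]
    rw [h0, iterPartial_sum_smul (fun k => Ri j k) (fun k y => W (t, r.mulVec y) k)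
      (fun k => (hWc k).comp (r.mulVecLin.toContinuousLinearMap.contDiff)) x γ]
    exact Finset.sum_congr rfl fun k _ => by
      rw [iterPartial_comp_mulVec n r (hWc k) x γ]
  have stepA : contractT n A (fun p => Ri.mulVec (W (p.1, r.mulVec p.2))) t x i = u i := by
    calc contractT n A (fun p => Ri.mulVec (W (p.1, r.mulVec p.2))) t x i
        = ∑ q, ∑ γ : Fin n → Fin d,
            A i q γ * (∑ k, Ri q k * ∑ β : Fin n → Fin d, (∏ m, r (β m) (γ m)) * D k β) := by
          unfold contractT
          exact Finset.sum_congr rfl fun q _ => Finset.sum_congr rfl fun γ _ => by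
            rw [hcomp q γ]
      _ = ∑ q, ∑ γ : Fin n → Fin d, ∑ k, ∑ β : Fin n → Fin d,
            A i q γ * (∏ m, r (β m) (γ m)) * Ri q k * D k β := by
          simp only [Finset.mul_sum]
          exact Finset.sum_congr rfl fun q _ => Finset.sum_congr rfl fun γ _ =>
            Finset.sum_congr rfl fun k _ => Finset.sum_congr rfl fun β _ => by ring
      _ = u i := (sum4_comm' _)
  -- Step B : `contractT` of `Phi r A` equals `∑ p, R l p * u p`.
  have stepB : ∀ l, contractT n (Phi r A) W t (r.mulVec x) l = ∑ p, R l p * u p := by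
    intro l
    calc contractT n (Phi r A) W t (r.mulVec x) l
        = ∑ k, ∑ β : Fin n → Fin d, ∑ p, ∑ q, ∑ γ : Fin n → Fin d,
            R l p * (A p q γ * (∏ m, r (β m) (γ m)) * Ri q k * D k β) := by
          unfold contractT Phi
          simp only [Finset.sum_mul]
          exact Finset.sum_congr rfl fun k _ => Finset.sum_congr rfl fun β _ =>
            Finset.sum_congr rfl fun p _ => Finset.sum_congr rfl fun q _ =>
            Finset.sum_congr rfl fun γ _ => by rw [← hRdef, ← hRidef, hD]; ring
      _ = ∑ p, ∑ k, ∑ β : Fin n → Fin d, ∑ q, ∑ γ : Fin n → Fin d,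
            R l p * (A p q γ * (∏ m, r (β m) (γ m)) * Ri q k * D k β) := sum3_comm' _
      _ = ∑ p, R l p * u p := by
          exact Finset.sum_congr rfl fun p _ => by rw [hu]; simp only [Finset.mul_sum]
  calc contractT n A (fun p => Ri.mulVec (W (p.1, r.mulVec p.2))) t x i = u i := stepA
    _ = ∑ l, Ri i l * ∑ p, R l p * u p := (collapse hone i u).symm
    _ = ∑ l, Ri i l * contractT n (Phi r A) W t (r.mulVec x) l :=
        Finset.sum_congr rfl fun l _ => by rw [stepB l]

/-- If each tensor `A_n`, `1 ≤ n ≤ M`, is a fixed point of the group action `Φ_n`,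
i.e. `Φ_n(r)(A_n) = A_n` for every `r ∈ O_d(ℝ)`, then the PDE system
`∂_t W + Σ_{n=1}^M A_n : ∇^n W = 0` is isotropic: for every `C^{M+1}` solution `W`
and every `r ∈ O_d(ℝ)`, the rotated function `W̃(t, x̃) = (Diag(1,r))⁻¹ W(t, r x̃)`
is again a solution of the same system. -/
theorem pde_system_isotropic (d M : ℕ) (hd : 0 < d) (hM : 0 < M)
    (A : (n : ℕ) → Fin (d + 1) → Fin (d + 1) → (Fin n → Fin d) → ℝ)
    (hA : ∀ n ∈ Finset.Icc 1 M, ∀ r : Matrix (Fin d) (Fin d) ℝ,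
      rᵀ * r = 1 → Phi r (A n) = A n)
    (W : ℝ × (Fin d → ℝ) → (Fin (d + 1) → ℝ))
    (hW : ContDiff ℝ (M + 1) W)
    (hpde : ∀ (t : ℝ) (x : Fin d → ℝ) (i : Fin (d + 1)),
      deriv (fun s => W (s, x) i) t
        + ∑ n ∈ Finset.Icc 1 M, contractT n (A n) W t x i = 0)
    (r : Matrix (Fin d) (Fin d) ℝ) (hr : rᵀ * r = 1) :
    ∀ (t : ℝ) (xt : Fin d → ℝ) (i : Fin (d + 1)),
      deriv (fun s => (diagOne r)⁻¹.mulVec (W (s, r.mulVec xt)) i) t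
        + ∑ n ∈ Finset.Icc 1 M,
            contractT n (A n)
              (fun p => (diagOne r)⁻¹.mulVec (W (p.1, r.mulVec p.2))) t xt i = 0 := by
  classical
  intro t xt i
  have hWy : ∀ (n : ℕ), n ≤ M → ∀ (t : ℝ) (k : Fin (d + 1)),
      ContDiff ℝ (n : ℕ∞) (fun y => W (t, y) k) := by
    intro n hn t k
    have h1 : ContDiff ℝ (↑M + 1) (fun y : Fin d → ℝ => W (t, y)) :=
      hW.comp (contDiff_const.prodMk contDiff_id)
    have h2 : ContDiff ℝ (↑M + 1) (fun y : Fin d → ℝ => W (t, y) k) :=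
      (ContinuousLinearMap.proj k :
        ((Fin (d + 1)) → ℝ) →L[ℝ] ℝ).contDiff.comp h1
    exact h2.of_le (le_trans (by exact_mod_cast hn) le_self_add)
  -- rewrite the spatial part
  have key : ∀ n ∈ Finset.Icc 1 M,
      contractT n (A n) (fun p => (diagOne r)⁻¹.mulVec (W (p.1, r.mulVec p.2))) t xt i
        = ∑ l, (diagOne r)⁻¹ i l * contractT n (A n) W t (r.mulVec xt) l := by
    intro n hn
    have h := contract_rotate n (A n) W t
      (fun k => hWy n (Finset.mem_Icc.mp hn).2 t k) r hr xt i
    rw [hA n hn r hr] at h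
    exact h
  -- differentiability of the time slices
  have hds : ∀ l : Fin (d + 1), DifferentiableAt ℝ (fun s => W (s, r.mulVec xt) l) t := by
    intro l
    have h1 : Differentiable ℝ (fun s : ℝ => W (s, r.mulVec xt)) :=
      (hW.differentiable (by simp)).comp (differentiable_id.prodMk (differentiable_const _))
    exact ((ContinuousLinearMap.proj l :
      ((Fin (d + 1)) → ℝ) →L[ℝ] ℝ).differentiable.comp h1).differentiableAt
  -- rewrite the time derivative
  have hder : deriv (fun s => (diagOne r)⁻¹.mulVec (W (s, r.mulVec xt)) i) t
      = ∑ l, (diagOne r)⁻¹ i l * deriv (fun s => W (s, r.mulVec xt) l) t := by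
    have h0 : (fun s => (diagOne r)⁻¹.mulVec (W (s, r.mulVec xt)) i)
        = fun s => ∑ l, (diagOne r)⁻¹ i l * W (s, r.mulVec xt) l := by
      funext s; simp [Matrix.mulVec, dotProduct]
    rw [h0, deriv_fun_sum (fun l _ => ((hds l).const_mul _))]
    exact Finset.sum_congr rfl fun l _ => deriv_const_mul _ (hds l)
  rw [hder, Finset.sum_congr rfl key, Finset.sum_comm]
  rw [← Finset.sum_add_distrib]
  have : ∀ l : Fin (d + 1),
      (diagOne r)⁻¹ i l * deriv (fun s => W (s, r.mulVec xt) l) t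
        + ∑ n ∈ Finset.Icc 1 M, (diagOne r)⁻¹ i l * contractT n (A n) W t (r.mulVec xt) l
      = 0 := by
    intro l
    rw [← Finset.mul_sum, ← mul_add, hpde t (r.mulVec xt) l, mul_zero]
  simp only [this, Finset.sum_const_zero]
end
end
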